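/- Let ζ ∈ ℂ be a primitive 6th root of unity and consider the polynomial ring ℂ[x_0, …, x_5] with variables indexed by ℤ/6. Define f_0 = x_0³ + x_2³ + x_4³, f_1 = x_1²x_4 + x_3²x_0 + x_5²x_2, f_2 = x_1x_2x_3 + x_3x_4x_5 + x_5x_0x_1, f_3 = x_0x_2x_4, and let g_i (for i = 0, 1, 2, 3) be the polynomial obtained from f_i by the substitution x_j ↦ x_{j+1} (indices mod 6). Then the ℂ-vector space of homogeneous cubic polynomials invariant under both substitutions x_j ↦ x_{j+2} and x_j ↦ ζ^{2j} x_j (indices mod 6) is exactly the span of {f_0, f_1, f_2, f_3, g_0, g_1, g_2, g_3}, and these eight polynomials are linearly independent; in particular this space has dimension 8. -/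

import Mathlib

open MvPolynomial

section Stmt10Aux

open Finsupp

/-- Auxiliary: the monomial with exponent multiset `t`. -/
noncomputable def stMon (t : Multiset (ZMod 6)) : MvPolynomial (ZMod 6) ℂ :=
  monomial (Multiset.toFinsupp t) 1

/-- Auxiliary: sum of monomials indexed by a multiset of exponent multisets. -/
noncomputable def stSum (l : Multiset (Multiset (ZMod 6))) : MvPolynomial (ZMod 6) ℂ :=
  (l.map stMon).sum

/-- Auxiliary weight. -/
noncomputable def stWt (s : ZMod 6 →₀ ℕ) : ℕ := Finsupp.weight ZMod.val s

lemma stMon_mul (s t : Multiset (ZMod 6)) : stMon s * stMon t = stMon (s + t) := by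
  simp [stMon, monomial_mul, Multiset.toFinsupp_add]

lemma stX_eq (a : ZMod 6) : (X a : MvPolynomial (ZMod 6) ℂ) = stMon {a} := by
  rw [stMon, Multiset.toFinsupp_singleton]
  rfl

lemma stXcube (a : ZMod 6) : (X a : MvPolynomial (ZMod 6) ℂ) ^ 3 = stMon {a, a, a} := by
  rw [show ((3:ℕ)) = 2 + 1 from rfl, pow_succ, pow_two, stX_eq, stMon_mul, stMon_mul]
  rfl

lemma stXsq_mul (a b : ZMod 6) :
    (X a : MvPolynomial (ZMod 6) ℂ) ^ 2 * X b = stMon {a, a, b} := by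
  rw [pow_two, stX_eq, stX_eq b, stMon_mul, stMon_mul]
  rfl

lemma stXmul3 (a b c : ZMod 6) :
    (X a : MvPolynomial (ZMod 6) ℂ) * X b * X c = stMon {a, b, c} := by
  rw [stX_eq, stX_eq b, stX_eq c, stMon_mul, stMon_mul]
  rfl

lemma stSum3 (u v w : Multiset (ZMod 6)) : stSum {u, v, w} = stMon u + stMon v + stMon w := by
  simp [stSum]; ring

lemma stSum1 (u : Multiset (ZMod 6)) : stSum {u} = stMon u := by
  simp [stSum]

lemma st_mapDomain_toFinsupp (e : ZMod 6 → ZMod 6) (t : Multiset (ZMod 6)) :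
    Finsupp.mapDomain e (Multiset.toFinsupp t) = Multiset.toFinsupp (t.map e) := by
  have := Finsupp.toMultiset_map (Multiset.toFinsupp t) e
  rw [Multiset.toFinsupp_toMultiset] at this
  rw [this, Finsupp.toMultiset_toFinsupp]

lemma st_rename_M (e : ZMod 6 → ZMod 6) (t : Multiset (ZMod 6)) :
    rename e (stMon t) = stMon (t.map e) := by
  rw [stMon, rename_monomial, stMon, st_mapDomain_toFinsupp]

lemma st_coeff_shift (p : MvPolynomial (ZMod 6) ℂ)
    (hp : rename (fun j : ZMod 6 => j + 2) p = p) (t : Multiset (ZMod 6)) :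
    coeff (Multiset.toFinsupp (t.map (· + 2))) p = coeff (Multiset.toFinsupp t) p := by
  conv_lhs => rw [← hp]
  rw [← st_mapDomain_toFinsupp]
  exact coeff_rename_mapDomain _ (fun a b h => by simpa using h) p _

lemma st_coeff_M (t u : Multiset (ZMod 6)) :
    coeff (Multiset.toFinsupp t) (stMon u) = if u = t then 1 else 0 := by
  rw [stMon, coeff_monomial]
  simp [EmbeddingLike.apply_eq_iff_eq]

lemma st_degree_toFinsupp (t : Multiset (ZMod 6)) :
    Finsupp.degree (Multiset.toFinsupp t) = Multiset.card t :=
  Multiset.toFinsupp_sum_eq t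

lemma st_exists_triple (s : ZMod 6 →₀ ℕ) (h : Finsupp.degree s = 3) :
    ∃ a b c : ZMod 6, s = Multiset.toFinsupp {a, b, c} := by
  have hc : Multiset.card (Finsupp.toMultiset s) = 3 := by
    rw [Finsupp.card_toMultiset]; exact h
  obtain ⟨a, b, c, habc⟩ := Multiset.card_eq_three.mp hc
  exact ⟨a, b, c, Finsupp.toMultiset_eq_iff.mp habc⟩

lemma stWt_toFinsupp (u : Multiset (ZMod 6)) :
    stWt (Multiset.toFinsupp u) = (u.map ZMod.val).sum := by
  induction u using Multiset.induction with
  | empty => simp [stWt]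
  | cons a u ih =>
    rw [← Multiset.singleton_add, Multiset.toFinsupp_add, Multiset.toFinsupp_singleton, stWt,
      map_add, Multiset.map_add, Multiset.sum_add]
    rw [show (weight ZMod.val) (Multiset.toFinsupp u) = stWt (Multiset.toFinsupp u) from rfl, ih,
      Multiset.map_singleton, Multiset.sum_singleton]
    congr 1
    simp [stWt, Finsupp.weight_apply, Finsupp.sum_single_index]

lemma st_tau_monomial (ζ : ℂ) (s : ZMod 6 →₀ ℕ) (r : ℂ) :
    aeval (fun j : ZMod 6 => (ζ ^ (2 * j.val)) • X j) (monomial s r)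
      = ζ ^ (2 * stWt s) • monomial s r := by
  rw [aeval_monomial]
  have h1 : (s.prod fun j e => ((ζ ^ (2 * j.val)) • X j : MvPolynomial (ZMod 6) ℂ) ^ e)
      = (ζ ^ (2 * stWt s)) • s.prod fun j e => (X j : MvPolynomial (ZMod 6) ℂ) ^ e := by
    rw [Finsupp.prod, Finsupp.prod]
    simp_rw [smul_pow, ← pow_mul, smul_eq_C_mul]
    rw [Finset.prod_mul_distrib, ← map_prod, Finset.prod_pow_eq_pow_sum]
    congr 2
    rw [stWt, Finsupp.weight_apply, Finsupp.sum, Finset.mul_sum]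
    congr 1
    exact Finset.sum_congr rfl fun j _ => by simp only [smul_eq_mul]; ring
  rw [h1, smul_eq_C_mul, smul_eq_C_mul, ← mul_assoc,
    mul_comm (algebraMap ℂ (MvPolynomial (ZMod 6) ℂ) r), mul_assoc]
  congr 1
  rw [show (algebraMap ℂ (MvPolynomial (ZMod 6) ℂ)) r = C r from rfl, ← monomial_eq]

lemma st_coeff_tau (ζ : ℂ) (p : MvPolynomial (ZMod 6) ℂ) (s : ZMod 6 →₀ ℕ) :
    coeff s (aeval (fun j : ZMod 6 => (ζ ^ (2 * j.val)) • X j) p)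
      = ζ ^ (2 * stWt s) * coeff s p := by
  conv_lhs => rw [p.as_sum]
  rw [map_sum, coeff_sum]
  simp_rw [st_tau_monomial, coeff_smul, coeff_monomial, smul_eq_mul, mul_ite, mul_zero]
  rw [Finset.sum_ite_eq' p.support s (fun v => ζ ^ (2 * stWt v) * coeff v p)]
  by_cases h : s ∈ p.support
  · rw [if_pos h]
  · rw [if_neg h, MvPolynomial.notMem_support_iff.mp h, mul_zero]

lemma st_coeff_eq_zero_of_tau {ζ : ℂ} (hζ : IsPrimitiveRoot ζ 6)
    {p : MvPolynomial (ZMod 6) ℂ}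
    (hp : aeval (fun j : ZMod 6 => (ζ ^ (2 * j.val)) • X j) p = p)
    (s : ZMod 6 →₀ ℕ) (h3 : ¬ (3 ∣ stWt s)) : coeff s p = 0 := by
  have h := st_coeff_tau ζ p s
  rw [hp] at h
  have hne : ζ ^ (2 * stWt s) ≠ 1 := by
    intro hone
    rw [hζ.pow_eq_one_iff_dvd] at hone; omega
  have h0 : (ζ ^ (2 * stWt s) - 1) * coeff s p = 0 := by linear_combination -h
  exact (mul_eq_zero.mp h0).resolve_left (sub_ne_zero.mpr hne)

lemma st_S_hom (l : Multiset (Multiset (ZMod 6))) (h : ∀ u ∈ l, Multiset.card u = 3) :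
    stSum l ∈ homogeneousSubmodule (ZMod 6) ℂ 3 := by
  refine multiset_sum_mem _ fun x hx => ?_
  obtain ⟨u, hu, rfl⟩ := Multiset.mem_map.mp hx
  rw [mem_homogeneousSubmodule, stMon]
  exact isHomogeneous_monomial _
    (by rw [Finsupp.degree, ← h u hu]; exact Multiset.toFinsupp_sum_eq u)

lemma st_sigma_S (e : ZMod 6 → ZMod 6) (l : Multiset (Multiset (ZMod 6))) :
    rename e (stSum l) = stSum (l.map (Multiset.map e)) := by
  rw [stSum, map_multiset_sum, Multiset.map_map, stSum, Multiset.map_map]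
  congr 1
  exact Multiset.map_congr rfl fun u _ => st_rename_M e u

lemma st_tau_S (ζ : ℂ) (hζ : ζ ^ 6 = 1) (l : Multiset (Multiset (ZMod 6)))
    (h : ∀ u ∈ l, 3 ∣ (u.map ZMod.val).sum) :
    aeval (fun j : ZMod 6 => (ζ ^ (2 * j.val)) • X j) (stSum l) = stSum l := by
  rw [stSum, map_multiset_sum, Multiset.map_map]
  congr 1
  refine Multiset.map_congr rfl fun u hu => ?_
  rw [Function.comp_apply, stMon, st_tau_monomial, stWt_toFinsupp]
  obtain ⟨k, hk⟩ := h u hu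
  rw [hk, show 2 * (3 * k) = 6 * k by ring, pow_mul, hζ, one_pow, one_smul]

def stL : List (Multiset (ZMod 6)) :=
  [{0,0,0},{2,2,2},{4,4,4}, {1,1,4},{3,3,0},{5,5,2}, {1,2,3},{3,4,5},{5,0,1}, {0,2,4},
   {1,1,1},{3,3,3},{5,5,5}, {2,2,5},{4,4,1},{0,0,3}, {2,3,4},{4,5,0},{0,1,2}, {1,3,5}]

lemma st_classify : ∀ a b c : ZMod 6, 3 ∣ (a.val + b.val + c.val) →
    ({a, b, c} : Multiset (ZMod 6)) ∈ stL := by decide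

end Stmt10Aux

/-- Over `ℂ[x₀,…,x₅]` (variables indexed by `ℤ/6`, ζ a primitive 6th root of
unity), the space of homogeneous cubics invariant under both substitutions `x_j ↦ x_{j+2}`
and `x_j ↦ ζ^{2j} x_j` equals the span of `f₀, f₁, f₂, f₃, g₀, g₁, g₂, g₃` (where
`g_i = σ f_i` is obtained by the shift `x_j ↦ x_{j+1}`), these eight cubics are linearly
independent, and the space has dimension 8. -/
theorem stmt_10 (ζ : ℂ) (hζ : IsPrimitiveRoot ζ 6)
    (σ2 τ2 : MvPolynomial (ZMod 6) ℂ →ₐ[ℂ] MvPolynomial (ZMod 6) ℂ)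
    (hσ2 : σ2 = rename (fun j : ZMod 6 => j + 2))
    (hτ2 : τ2 = aeval (fun j : ZMod 6 => (ζ ^ (2 * j.val)) • X j))
    (f g : Fin 4 → MvPolynomial (ZMod 6) ℂ)
    (hf0 : f 0 = X 0 ^ 3 + X 2 ^ 3 + X 4 ^ 3)
    (hf1 : f 1 = X 1 ^ 2 * X 4 + X 3 ^ 2 * X 0 + X 5 ^ 2 * X 2)
    (hf2 : f 2 = X 1 * X 2 * X 3 + X 3 * X 4 * X 5 + X 5 * X 0 * X 1)
    (hf3 : f 3 = X 0 * X 2 * X 4)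
    (hg : ∀ i, g i = rename (fun j : ZMod 6 => j + 1) (f i)) :
    (homogeneousSubmodule (ZMod 6) ℂ 3 ⊓
        LinearMap.eqLocus σ2.toLinearMap LinearMap.id ⊓
        LinearMap.eqLocus τ2.toLinearMap LinearMap.id
      = Submodule.span ℂ {f 0, f 1, f 2, f 3, g 0, g 1, g 2, g 3}) ∧
    LinearIndependent ℂ ![f 0, f 1, f 2, f 3, g 0, g 1, g 2, g 3] ∧
    Module.finrank ℂ
      ↥(homogeneousSubmodule (ZMod 6) ℂ 3 ⊓
        LinearMap.eqLocus σ2.toLinearMap LinearMap.id ⊓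
        LinearMap.eqLocus τ2.toLinearMap LinearMap.id) = 8 := by
  have h6 : ζ ^ 6 = 1 := hζ.pow_eq_one
  -- rewrite the generators in `stSum` form
  have hb0 : f 0 = stSum {{0,0,0},{2,2,2},{4,4,4}} := by
    rw [hf0, stXcube, stXcube, stXcube, stSum3]
  have hb1 : f 1 = stSum {{1,1,4},{3,3,0},{5,5,2}} := by
    rw [hf1, stXsq_mul, stXsq_mul, stXsq_mul, stSum3]
  have hb2 : f 2 = stSum {{1,2,3},{3,4,5},{5,0,1}} := by
    rw [hf2, stXmul3, stXmul3, stXmul3, stSum3]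
  have hb3 : f 3 = stSum {{0,2,4}} := by rw [hf3, stXmul3, stSum1]
  have hb4 : g 0 = stSum {{1,1,1},{3,3,3},{5,5,5}} := by
    rw [hg 0, hb0, st_sigma_S]; congr 1
  have hb5 : g 1 = stSum {{2,2,5},{4,4,1},{0,0,3}} := by
    rw [hg 1, hb1, st_sigma_S]; congr 1
  have hb6 : g 2 = stSum {{2,3,4},{4,5,0},{0,1,2}} := by
    rw [hg 2, hb2, st_sigma_S]; congr 1
  have hb7 : g 3 = stSum {{1,3,5}} := by
    rw [hg 3, hb3, st_sigma_S]; congr 1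
  set A := homogeneousSubmodule (ZMod 6) ℂ 3 ⊓
      LinearMap.eqLocus σ2.toLinearMap LinearMap.id ⊓
      LinearMap.eqLocus τ2.toLinearMap LinearMap.id with hAdef
  have hA_iff : ∀ q : MvPolynomial (ZMod 6) ℂ, q ∈ A ↔
      (q.IsHomogeneous 3 ∧ rename (fun j : ZMod 6 => j + 2) q = q ∧
        aeval (fun j : ZMod 6 => (ζ ^ (2 * j.val)) • X j) q = q) := by
    intro q
    rw [hAdef, Submodule.mem_inf, Submodule.mem_inf, mem_homogeneousSubmodule,
      LinearMap.mem_eqLocus, LinearMap.mem_eqLocus]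
    simp only [AlgHom.toLinearMap_apply, LinearMap.id_coe, id_eq, hσ2, hτ2, and_assoc]
  have hmemS : ∀ l : Multiset (Multiset (ZMod 6)), (∀ u ∈ l, Multiset.card u = 3) →
      (l.map (Multiset.map (· + 2)) = l) → (∀ u ∈ l, 3 ∣ (u.map ZMod.val).sum) →
      stSum l ∈ A := by
    intro l h1 h2 h3
    rw [hA_iff]
    refine ⟨st_S_hom l h1, ?_, st_tau_S ζ h6 l h3⟩
    rw [st_sigma_S, h2]
  have hm0 : f 0 ∈ A := by rw [hb0]; exact hmemS _ (by decide) (by decide) (by decide)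
  have hm1 : f 1 ∈ A := by rw [hb1]; exact hmemS _ (by decide) (by decide) (by decide)
  have hm2 : f 2 ∈ A := by rw [hb2]; exact hmemS _ (by decide) (by decide) (by decide)
  have hm3 : f 3 ∈ A := by rw [hb3]; exact hmemS _ (by decide) (by decide) (by decide)
  have hm4 : g 0 ∈ A := by rw [hb4]; exact hmemS _ (by decide) (by decide) (by decide)
  have hm5 : g 1 ∈ A := by rw [hb5]; exact hmemS _ (by decide) (by decide) (by decide)
  have hm6 : g 2 ∈ A := by rw [hb6]; exact hmemS _ (by decide) (by decide) (by decide)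
  have hm7 : g 3 ∈ A := by rw [hb7]; exact hmemS _ (by decide) (by decide) (by decide)
  have hspan_le : Submodule.span ℂ {f 0, f 1, f 2, f 3, g 0, g 1, g 2, g 3} ≤ A := by
    rw [Submodule.span_le]
    intro x hx
    simp only [Set.mem_insert_iff, Set.mem_singleton_iff] at hx
    rcases hx with rfl|rfl|rfl|rfl|rfl|rfl|rfl|rfl
    exacts [hm0, hm1, hm2, hm3, hm4, hm5, hm6, hm7]
  have hle : A ≤ Submodule.span ℂ {f 0, f 1, f 2, f 3, g 0, g 1, g 2, g 3} := by
    intro p hp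
    rw [hA_iff] at hp
    obtain ⟨hhom, hσ, hτ⟩ := hp
    have hsh := st_coeff_shift p hσ
    have e1 : coeff (Multiset.toFinsupp ({2,2,2} : Multiset (ZMod 6))) p = coeff (Multiset.toFinsupp ({0,0,0} : Multiset (ZMod 6))) p := by
      rw [show ({2,2,2} : Multiset (ZMod 6)) = Multiset.map (· + 2) {0,0,0} by decide, hsh]
    have e2 : coeff (Multiset.toFinsupp ({4,4,4} : Multiset (ZMod 6))) p = coeff (Multiset.toFinsupp ({0,0,0} : Multiset (ZMod 6))) p := by
      rw [show ({4,4,4} : Multiset (ZMod 6)) = Multiset.map (· + 2) {2,2,2} by decide, hsh, e1]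
    have e3 : coeff (Multiset.toFinsupp ({3,3,0} : Multiset (ZMod 6))) p = coeff (Multiset.toFinsupp ({1,1,4} : Multiset (ZMod 6))) p := by
      rw [show ({3,3,0} : Multiset (ZMod 6)) = Multiset.map (· + 2) {1,1,4} by decide, hsh]
    have e4 : coeff (Multiset.toFinsupp ({5,5,2} : Multiset (ZMod 6))) p = coeff (Multiset.toFinsupp ({1,1,4} : Multiset (ZMod 6))) p := by
      rw [show ({5,5,2} : Multiset (ZMod 6)) = Multiset.map (· + 2) {3,3,0} by decide, hsh, e3]
    have e5 : coeff (Multiset.toFinsupp ({3,4,5} : Multiset (ZMod 6))) p = coeff (Multiset.toFinsupp ({1,2,3} : Multiset (ZMod 6))) p := by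
      rw [show ({3,4,5} : Multiset (ZMod 6)) = Multiset.map (· + 2) {1,2,3} by decide, hsh]
    have e6 : coeff (Multiset.toFinsupp ({5,0,1} : Multiset (ZMod 6))) p = coeff (Multiset.toFinsupp ({1,2,3} : Multiset (ZMod 6))) p := by
      rw [show ({5,0,1} : Multiset (ZMod 6)) = Multiset.map (· + 2) {3,4,5} by decide, hsh, e5]
    have e7 : coeff (Multiset.toFinsupp ({3,3,3} : Multiset (ZMod 6))) p = coeff (Multiset.toFinsupp ({1,1,1} : Multiset (ZMod 6))) p := by
      rw [show ({3,3,3} : Multiset (ZMod 6)) = Multiset.map (· + 2) {1,1,1} by decide, hsh]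
    have e8 : coeff (Multiset.toFinsupp ({5,5,5} : Multiset (ZMod 6))) p = coeff (Multiset.toFinsupp ({1,1,1} : Multiset (ZMod 6))) p := by
      rw [show ({5,5,5} : Multiset (ZMod 6)) = Multiset.map (· + 2) {3,3,3} by decide, hsh, e7]
    have e9 : coeff (Multiset.toFinsupp ({4,4,1} : Multiset (ZMod 6))) p = coeff (Multiset.toFinsupp ({2,2,5} : Multiset (ZMod 6))) p := by
      rw [show ({4,4,1} : Multiset (ZMod 6)) = Multiset.map (· + 2) {2,2,5} by decide, hsh]
    have e10 : coeff (Multiset.toFinsupp ({0,0,3} : Multiset (ZMod 6))) p = coeff (Multiset.toFinsupp ({2,2,5} : Multiset (ZMod 6))) p := by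
      rw [show ({0,0,3} : Multiset (ZMod 6)) = Multiset.map (· + 2) {4,4,1} by decide, hsh, e9]
    have e11 : coeff (Multiset.toFinsupp ({4,5,0} : Multiset (ZMod 6))) p = coeff (Multiset.toFinsupp ({2,3,4} : Multiset (ZMod 6))) p := by
      rw [show ({4,5,0} : Multiset (ZMod 6)) = Multiset.map (· + 2) {2,3,4} by decide, hsh]
    have e12 : coeff (Multiset.toFinsupp ({0,1,2} : Multiset (ZMod 6))) p = coeff (Multiset.toFinsupp ({2,3,4} : Multiset (ZMod 6))) p := by
      rw [show ({0,1,2} : Multiset (ZMod 6)) = Multiset.map (· + 2) {4,5,0} by decide, hsh, e11]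
    have hQA : (coeff (Multiset.toFinsupp ({0,0,0} : Multiset (ZMod 6))) p) • f 0 + (coeff (Multiset.toFinsupp ({1,1,4} : Multiset (ZMod 6))) p) • f 1 + (coeff (Multiset.toFinsupp ({1,2,3} : Multiset (ZMod 6))) p) • f 2 + (coeff (Multiset.toFinsupp ({0,2,4} : Multiset (ZMod 6))) p) • f 3 + (coeff (Multiset.toFinsupp ({1,1,1} : Multiset (ZMod 6))) p) • g 0 + (coeff (Multiset.toFinsupp ({2,2,5} : Multiset (ZMod 6))) p) • g 1 + (coeff (Multiset.toFinsupp ({2,3,4} : Multiset (ZMod 6))) p) • g 2 + (coeff (Multiset.toFinsupp ({1,3,5} : Multiset (ZMod 6))) p) • g 3 ∈ A :=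
      add_mem (add_mem (add_mem (add_mem (add_mem (add_mem (add_mem
        (Submodule.smul_mem _ _ hm0) (Submodule.smul_mem _ _ hm1)) (Submodule.smul_mem _ _ hm2))
        (Submodule.smul_mem _ _ hm3)) (Submodule.smul_mem _ _ hm4)) (Submodule.smul_mem _ _ hm5))
        (Submodule.smul_mem _ _ hm6)) (Submodule.smul_mem _ _ hm7)
    rw [hb0, hb1, hb2, hb3, hb4, hb5, hb6, hb7] at hQA
    rw [hA_iff] at hQA
    obtain ⟨hQhom, -, hQτ⟩ := hQA
    have key : p = (coeff (Multiset.toFinsupp ({0,0,0} : Multiset (ZMod 6))) p) • f 0 + (coeff (Multiset.toFinsupp ({1,1,4} : Multiset (ZMod 6))) p) • f 1 + (coeff (Multiset.toFinsupp ({1,2,3} : Multiset (ZMod 6))) p) • f 2 + (coeff (Multiset.toFinsupp ({0,2,4} : Multiset (ZMod 6))) p) • f 3 + (coeff (Multiset.toFinsupp ({1,1,1} : Multiset (ZMod 6))) p) • g 0 + (coeff (Multiset.toFinsupp ({2,2,5} : Multiset (ZMod 6))) p) • g 1 + (coeff (Multiset.toFinsupp ({2,3,4} : Multiset (ZMod 6)))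 p) • g 2 + (coeff (Multiset.toFinsupp ({1,3,5} : Multiset (ZMod 6))) p) • g 3 := by
      rw [hb0, hb1, hb2, hb3, hb4, hb5, hb6, hb7]
      apply MvPolynomial.ext
      intro s
      by_cases hdeg : Finsupp.degree s = 3
      · obtain ⟨a, b, c, rfl⟩ := st_exists_triple s hdeg
        by_cases hw : (3:ℕ) ∣ (a.val + b.val + c.val)
        · have hmem := st_classify a b c hw
          simp only [stL, List.mem_cons, List.not_mem_nil, or_false] at hmem
          rcases hmem with h|h|h|h|h|h|h|h|h|h|h|h|h|h|h|h|h|h|h|h <;> rw [h] <;>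
            (try simp only [e1, e2, e3, e4, e5, e6, e7, e8, e9, e10, e11, e12]) <;>
            simp (config := { decide := true }) only [stSum3, stSum1, coeff_add, coeff_smul,
              st_coeff_M, if_true, if_false, smul_eq_mul, mul_one, mul_zero, add_zero, zero_add]
        · have hW : ¬ (3 ∣ stWt (Multiset.toFinsupp ({a, b, c} : Multiset (ZMod 6)))) := by
            rw [stWt_toFinsupp]
            simp only [Multiset.insert_eq_cons, Multiset.map_cons, Multiset.map_singleton,
              Multiset.sum_cons, Multiset.sum_singleton]
            omega
          rw [st_coeff_eq_zero_of_tau hζ hτ _ hW, st_coeff_eq_zero_of_tau hζ hQτ _ hW]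
      · rw [hhom.coeff_eq_zero hdeg, hQhom.coeff_eq_zero hdeg]
    rw [key]
    refine add_mem (add_mem (add_mem (add_mem (add_mem (add_mem (add_mem
      (Submodule.smul_mem _ _ ?_) (Submodule.smul_mem _ _ ?_)) (Submodule.smul_mem _ _ ?_))
      (Submodule.smul_mem _ _ ?_)) (Submodule.smul_mem _ _ ?_)) (Submodule.smul_mem _ _ ?_))
      (Submodule.smul_mem _ _ ?_)) (Submodule.smul_mem _ _ ?_) <;>
      apply Submodule.subset_span <;> simp
  have hEq : A = Submodule.span ℂ {f 0, f 1, f 2, f 3, g 0, g 1, g 2, g 3} :=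
    le_antisymm hle hspan_le
  have hli : LinearIndependent ℂ ![f 0, f 1, f 2, f 3, g 0, g 1, g 2, g 3] := by
    rw [Fintype.linearIndependent_iff]
    intro z hz
    have v4 : (![f 0, f 1, f 2, f 3, g 0, g 1, g 2, g 3]) 4 = g 0 := rfl
    have v5 : (![f 0, f 1, f 2, f 3, g 0, g 1, g 2, g 3]) 5 = g 1 := rfl
    have v6 : (![f 0, f 1, f 2, f 3, g 0, g 1, g 2, g 3]) 6 = g 2 := rfl
    have v7 : (![f 0, f 1, f 2, f 3, g 0, g 1, g 2, g 3]) 7 = g 3 := rfl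
    simp only [Fin.sum_univ_eight, Matrix.cons_val_zero, Matrix.cons_val_one, Matrix.head_cons,
      Matrix.cons_val_two, Matrix.tail_cons, Matrix.cons_val_three, v4, v5, v6, v7] at hz
    rw [hb0, hb1, hb2, hb3, hb4, hb5, hb6, hb7] at hz
    have key : ∀ t : Multiset (ZMod 6),
        coeff (Multiset.toFinsupp t) (z 0 • stSum {{0,0,0},{2,2,2},{4,4,4}} +
          z 1 • stSum {{1,1,4},{3,3,0},{5,5,2}} + z 2 • stSum {{1,2,3},{3,4,5},{5,0,1}} +
          z 3 • stSum {{0,2,4}} + z 4 • stSum {{1,1,1},{3,3,3},{5,5,5}} +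
          z 5 • stSum {{2,2,5},{4,4,1},{0,0,3}} + z 6 • stSum {{2,3,4},{4,5,0},{0,1,2}} +
          z 7 • stSum {{1,3,5}}) = 0 := by
      intro t; rw [hz]; exact coeff_zero _
    intro i
    fin_cases i <;> simp only [Fin.zero_eta, Fin.mk_one, Fin.reduceFinMk]
    · simpa (config := { decide := true }) only [stSum3, stSum1, coeff_add, coeff_smul,
        st_coeff_M, if_true, if_false, smul_eq_mul, mul_one, mul_zero, add_zero, zero_add]
        using key {0,0,0}
    · simpa (config := { decide := true }) only [stSum3, stSum1, coeff_add, coeff_smul,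
        st_coeff_M, if_true, if_false, smul_eq_mul, mul_one, mul_zero, add_zero, zero_add]
        using key {1,1,4}
    · simpa (config := { decide := true }) only [stSum3, stSum1, coeff_add, coeff_smul,
        st_coeff_M, if_true, if_false, smul_eq_mul, mul_one, mul_zero, add_zero, zero_add]
        using key {1,2,3}
    · simpa (config := { decide := true }) only [stSum3, stSum1, coeff_add, coeff_smul,
        st_coeff_M, if_true, if_false, smul_eq_mul, mul_one, mul_zero, add_zero, zero_add]
        using key {0,2,4}
    · simpa (config := { decide := true }) only [stSum3, stSum1, coeff_add, coeff_smul,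
        st_coeff_M, if_true, if_false, smul_eq_mul, mul_one, mul_zero, add_zero, zero_add]
        using key {1,1,1}
    · simpa (config := { decide := true }) only [stSum3, stSum1, coeff_add, coeff_smul,
        st_coeff_M, if_true, if_false, smul_eq_mul, mul_one, mul_zero, add_zero, zero_add]
        using key {2,2,5}
    · simpa (config := { decide := true }) only [stSum3, stSum1, coeff_add, coeff_smul,
        st_coeff_M, if_true, if_false, smul_eq_mul, mul_one, mul_zero, add_zero, zero_add]
        using key {2,3,4}
    · simpa (config := { decide := true }) only [stSum3, stSum1, coeff_add, coeff_smul,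
        st_coeff_M, if_true, if_false, smul_eq_mul, mul_one, mul_zero, add_zero, zero_add]
        using key {1,3,5}
  have hr : Set.range ![f 0, f 1, f 2, f 3, g 0, g 1, g 2, g 3]
      = ({f 0, f 1, f 2, f 3, g 0, g 1, g 2, g 3} : Set (MvPolynomial (ZMod 6) ℂ)) := by
    simp only [Matrix.range_cons, Matrix.range_empty, Set.singleton_union, Set.union_empty,
      insert_empty_eq]
  refine ⟨hEq, hli, ?_⟩
  rw [hEq, ← hr]
  simpa using finrank_span_eq_card hli
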